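/- Consider one agent at 0 with weight w_min > 0 and one agent at 1 with weight w_max ≥ w_min. For a single facility, the weighted maximum cost at location 0 is w_max, while the minimum over y ∈ ℝ of max(w_min·|y|, w_max·|y − 1|) equals w_max·w_min/(w_max + w_min); hence the ratio of the cost at 0 to the optimum is exactly 1 + w_max/w_min. -/

import Mathlib

theorem stmt19 (wmin wmax : ℝ) (hmin : 0 < wmin) (hle : wmin ≤ wmax) :
    max (wmin * |(0 : ℝ) - 0|) (wmax * |(0 : ℝ) - 1|) = wmax ∧
    IsLeast (Set.range fun y : ℝ => max (wmin * |y - 0|) (wmax * |y - 1|))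
      (wmax * wmin / (wmax + wmin)) ∧
    wmax = (1 + wmax / wmin) * (wmax * wmin / (wmax + wmin)) := by
  have hmax : 0 < wmax := lt_of_lt_of_le hmin hle
  have hs : 0 < wmax + wmin := by linarith
  refine ⟨by simp [hmax.le], ⟨⟨wmax / (wmax + wmin), ?_⟩, ?_⟩, ?_⟩
  · show wmin * |wmax / (wmax + wmin) - 0| ⊔ wmax * |wmax / (wmax + wmin) - 1| = _
    have h1 : wmax / (wmax + wmin) - 0 = wmax / (wmax + wmin) := by ring
    have h2 : wmax / (wmax + wmin) - 1 = -(wmin / (wmax + wmin)) := by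
      field_simp
      ring
    rw [h1, h2, abs_of_nonneg (by positivity), abs_neg, abs_of_nonneg (by positivity)]
    rw [max_eq_left]
    · field_simp
    · exact le_of_eq (by ring)
  · rintro v ⟨y, rfl⟩
    simp only
    rcases le_or_gt y (wmax / (wmax + wmin)) with h | h
    · refine le_max_of_le_right ?_
      have : wmin / (wmax + wmin) ≤ 1 - y := by
        have h' := (le_div_iff₀ hs).mp h
        rw [div_le_iff₀ hs]
        nlinarith
      calc wmax * wmin / (wmax + wmin) = wmax * (wmin / (wmax + wmin)) := by ring
        _ ≤ wmax * (1 - y) := by nlinarith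
        _ ≤ wmax * |y - 1| := by
            have : 1 - y ≤ |y - 1| := by rw [abs_sub_comm]; exact le_abs_self _
            nlinarith
    · refine le_max_of_le_left ?_
      have hy : wmax / (wmax + wmin) ≤ y := le_of_lt h
      rw [div_le_iff₀ hs] at hy
      have : y - 0 ≤ |y - 0| := le_abs_self _
      rw [div_le_iff₀ hs]
      nlinarith [mul_le_mul_of_nonneg_left this hmin.le, mul_le_mul_of_nonneg_right hy hmin.le]
  · field_simp; ring
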